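/- In every 2-swap game with only strategic agents, n ≥ 2 agents, at least two agents of each of the two types, and a connected topology, every equilibrium assignment v satisfies SW(v) ≥ 1. Consequently, since the optimal social welfare is at most n, the social price of anarchy of such games is at most n. -/

import Mathlib

open Finset

namespace SwapGame

/-- Build a simple graph from a (not necessarily symmetric) boolean relation
by symmetrizing it and removing loops. -/
def mkGraph {V : Type*} (r : V → V → Bool) : SimpleGraph V where
  Adj a b := a ≠ b ∧ (r a b ∨ r b a)
  symm := ⟨fun a b h => ⟨Ne.symm h.1, Or.symm h.2⟩⟩
  loopless := ⟨fun a h => h.1 rfl⟩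

instance mkGraph.instDecidableRel {V : Type*} [DecidableEq V] (r : V → V → Bool) :
    DecidableRel (mkGraph r).Adj :=
  fun a b => inferInstanceAs (Decidable (a ≠ b ∧ (r a b ∨ r b a)))

variable {A V K : Type*} [Fintype V] [DecidableEq A] [DecidableEq V] [DecidableEq K]

/-- The assignment obtained from `σ` by swapping the locations of agents `i` and `j`. -/
def swapA (σ : A ≃ V) (i j : A) : A ≃ V := (Equiv.swap i j).trans σ

/-- The utility of agent `i` under assignment `σ`: the fraction of the neighbors of the
node of `i` that are occupied by agents of the same type (friends of `i`). -/
def util (G : SimpleGraph V) [DecidableRel G.Adj] (c : A → K) (σ : A ≃ V) (i : A) : ℚ :=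
  (((G.neighborFinset (σ i)).filter (fun w => c (σ.symm w) = c i)).card : ℚ) /
    ((G.neighborFinset (σ i)).card : ℚ)

/-- Agents `i` and `j` both strictly increase their utility by swapping their locations. -/
def improving (G : SimpleGraph V) [DecidableRel G.Adj] (c : A → K) (σ : A ≃ V)
    (i j : A) : Prop :=
  util G c σ i < util G c (swapA σ i j) i ∧ util G c σ j < util G c (swapA σ i j) j

/-- An assignment is an equilibrium if no pair of agents can both strictly increase
their utility by swapping positions. -/
def isEquilibrium (G : SimpleGraph V) [DecidableRel G.Adj] (c : A → K) (σ : A ≃ V) : Prop :=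
  ¬ ∃ i j : A, improving G c σ i j

/-- The social welfare of an assignment: the sum of the utilities of all agents. -/
def SW [Fintype A] (G : SimpleGraph V) [DecidableRel G.Adj] (c : A → K) (σ : A ≃ V) : ℚ :=
  ∑ i : A, util G c σ i

/-- Agent `i` is exposed: at least one neighbor is occupied by an agent of another type. -/
def exposed (G : SimpleGraph V) [DecidableRel G.Adj] (c : A → K) (σ : A ≃ V) (i : A) : Prop :=
  ((G.neighborFinset (σ i)).filter (fun w => c (σ.symm w) ≠ c i)).Nonempty

instance exposed.instDecidable (G : SimpleGraph V) [DecidableRel G.Adj] (c : A → K)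
    (σ : A ≃ V) : DecidablePred (exposed G c σ) :=
  fun _ => inferInstanceAs (Decidable (Finset.Nonempty _))

/-- The degree of integration of an assignment: the number of exposed agents. -/
def DI [Fintype A] (G : SimpleGraph V) [DecidableRel G.Adj] (c : A → K) (σ : A ≃ V) : ℕ :=
  (univ.filter (fun i : A => exposed G c σ i)).card

end SwapGame

namespace SwapGame


section Helpers
set_option linter.unusedSectionVars false
variable {A V : Type} [Fintype A] [DecidableEq A] [Fintype V] [DecidableEq V]
variable (G : SimpleGraph V) [DecidableRel G.Adj] (c : A → Fin 2)

lemma util_nonneg (σ : A ≃ V) (i : A) : 0 ≤ util G c σ i :=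
  div_nonneg (Nat.cast_nonneg _) (Nat.cast_nonneg _)

lemma util_le_one (σ : A ≃ V) (i : A) : util G c σ i ≤ 1 := by
  unfold util
  rcases Nat.eq_zero_or_pos (G.neighborFinset (σ i)).card with h | h
  · simp [h]
  · rw [div_le_one (by exact_mod_cast h)]
    exact_mod_cast Finset.card_filter_le _ _

lemma fin2_ne {a b x : Fin 2} (h : a ≠ b) : (x = a ↔ ¬ x = b) := by
  revert h; revert a b x; decide

lemma swapA_apply_left (σ : A ≃ V) (i j : A) : swapA σ i j i = σ j := by
  simp [swapA]

lemma swapA_comm (σ : A ≃ V) (i j : A) : swapA σ j i = swapA σ i j := by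
  unfold swapA
  rw [Equiv.swap_comm]

lemma swapA_symm_apply (σ : A ≃ V) (i j : A) (w : V) :
    (swapA σ i j).symm w = Equiv.swap i j (σ.symm w) := by
  simp [swapA, Equiv.symm_apply_eq, Equiv.swap_apply_self]

lemma degree_pos (hconn : G.Connected) (h2 : 1 < Fintype.card V) (v : V) :
    0 < G.degree v := by
  rw [G.degree_pos_iff_exists_adj]
  obtain ⟨w, hw⟩ := Fintype.exists_ne_of_one_lt_card h2 v
  obtain ⟨p⟩ := hconn.preconnected v w
  cases p with
  | nil => exact absurd rfl hw
  | cons h _ => exact ⟨_, h⟩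

lemma util_swap_not_adj (σ : A ≃ V) {i j : A} (hij : c i ≠ c j)
    (hna : ¬ G.Adj (σ i) (σ j)) (hd : 0 < (G.neighborFinset (σ j)).card) :
    util G c (swapA σ i j) i = 1 - util G c σ j := by
  have hni : σ i ∉ G.neighborFinset (σ j) := by
    rw [SimpleGraph.mem_neighborFinset]
    exact fun h => hna h.symm
  have hset : (G.neighborFinset (σ j)).filter (fun w => c ((swapA σ i j).symm w) = c i)
      = (G.neighborFinset (σ j)).filter (fun w => ¬ c (σ.symm w) = c j) := by
    apply Finset.filter_congr
    intro w hw
    have hwi : σ.symm w ≠ i := by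
      intro h
      exact hni (by rw [← h, Equiv.apply_symm_apply]; exact hw)
    have hwj : σ.symm w ≠ j := by
      intro h
      have hwj' : w = σ j := by rw [← h, Equiv.apply_symm_apply]
      rw [hwj', SimpleGraph.mem_neighborFinset] at hw
      exact G.irrefl hw
    rw [swapA_symm_apply, Equiv.swap_apply_of_ne_of_ne hwi hwj]
    exact fin2_ne hij
  have hcard : ((G.neighborFinset (σ j)).filter (fun w => ¬ c (σ.symm w) = c j)).card
      = (G.neighborFinset (σ j)).card
        - ((G.neighborFinset (σ j)).filter (fun w => c (σ.symm w) = c j)).card := by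
    have := Finset.card_filter_add_card_filter_not
      (s := G.neighborFinset (σ j)) (p := fun w => c (σ.symm w) = c j)
    omega
  have hle : ((G.neighborFinset (σ j)).filter (fun w => c (σ.symm w) = c j)).card
      ≤ (G.neighborFinset (σ j)).card := Finset.card_filter_le _ _
  have hd' : ((G.neighborFinset (σ j)).card : ℚ) ≠ 0 := by positivity
  simp only [util]
  rw [swapA_apply_left, hset, hcard, Nat.cast_sub hle, sub_div, div_self hd']

lemma util_swap_adj (σ : A ≃ V) {i j : A} (hij : c i ≠ c j)
    (ha : G.Adj (σ i) (σ j)) :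
    util G c (swapA σ i j) i
      = 1 - 1/((G.neighborFinset (σ j)).card : ℚ) - util G c σ j := by
  have hmem : σ i ∈ G.neighborFinset (σ j) := by
    rw [SimpleGraph.mem_neighborFinset]; exact ha.symm
  set s := G.neighborFinset (σ j) with hs
  set T := s.filter (fun w => ¬ c (σ.symm w) = c j) with hT
  have hiT : σ i ∈ T := by
    rw [hT, Finset.mem_filter]
    exact ⟨hmem, by simp [hij]⟩
  have hwjgen : ∀ w ∈ s, σ.symm w ≠ j := by
    intro w hw h
    have hwj' : w = σ j := by rw [← h, Equiv.apply_symm_apply]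
    rw [hs] at hw
    rw [hwj', SimpleGraph.mem_neighborFinset] at hw
    exact G.irrefl hw
  have hset : s.filter (fun w => c ((swapA σ i j).symm w) = c i) = T.erase (σ i) := by
    ext w
    rw [Finset.mem_erase, hT, Finset.mem_filter, Finset.mem_filter]
    constructor
    · rintro ⟨hw, hP⟩
      by_cases hwi : w = σ i
      · exfalso
        subst hwi
        rw [swapA_symm_apply, Equiv.symm_apply_apply, Equiv.swap_apply_left] at hP
        exact hij hP.symm
      · have hwi' : σ.symm w ≠ i := fun h => hwi (by rw [← h, Equiv.apply_symm_apply])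
        rw [swapA_symm_apply, Equiv.swap_apply_of_ne_of_ne hwi' (hwjgen w hw)] at hP
        exact ⟨hwi, hw, (fin2_ne hij).mp hP⟩
    · rintro ⟨hwi, hw, hq⟩
      have hwi' : σ.symm w ≠ i := fun h => hwi (by rw [← h, Equiv.apply_symm_apply])
      refine ⟨hw, ?_⟩
      rw [swapA_symm_apply, Equiv.swap_apply_of_ne_of_ne hwi' (hwjgen w hw)]
      exact (fin2_ne hij).mpr hq
  have hcT : T.card = s.card - (s.filter (fun w => c (σ.symm w) = c j)).card := by
    have := Finset.card_filter_add_card_filter_not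
      (s := s) (p := fun w => c (σ.symm w) = c j)
    rw [hT]
    omega
  have hle : (s.filter (fun w => c (σ.symm w) = c j)).card ≤ s.card :=
    Finset.card_filter_le _ _
  have hT1 : 1 ≤ T.card := Finset.card_pos.mpr ⟨σ i, hiT⟩
  have hfcard : (s.filter (fun w => c ((swapA σ i j).symm w) = c i)).card
      = s.card - (s.filter (fun w => c (σ.symm w) = c j)).card - 1 := by
    rw [hset, Finset.card_erase_of_mem hiT, hcT]
  have hd1 : 1 ≤ s.card := Finset.card_pos.mpr ⟨σ i, hmem⟩
  have hd' : ((s.card : ℚ)) ≠ 0 := by positivity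
  have hle2 : (s.filter (fun w => c (σ.symm w) = c j)).card + 1 ≤ s.card := by omega
  simp only [util]
  rw [swapA_apply_left, ← hs, hfcard]
  rw [show s.card - (s.filter (fun w => c (σ.symm w) = c j)).card - 1
      = s.card - ((s.filter (fun w => c (σ.symm w) = c j)).card + 1) by omega,
    Nat.cast_sub hle2]
  push_cast
  field_simp
  ring

end Helpers

/-- in every 2-swap game with only strategic agents, `n ≥ 2` agents,
at least two agents of each of the two types, and a connected topology, every
equilibrium assignment has social welfare at least 1; consequently (since the optimal
social welfare is at most `n`) the social price of anarchy is at most `n`. -/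
theorem sw_ge_one_of_equilibrium {A V : Type} [Fintype A] [DecidableEq A]
    [Fintype V] [DecidableEq V] (G : SimpleGraph V) [DecidableRel G.Adj]
    (hconn : G.Connected) (c : A → Fin 2)
    (hn : 2 ≤ Fintype.card A)
    (h0 : 2 ≤ (univ.filter (fun i => c i = 0)).card)
    (h1 : 2 ≤ (univ.filter (fun i => c i = 1)).card)
    (σ : A ≃ V) (heq : isEquilibrium G c σ) :
    1 ≤ SW G c σ ∧ ∀ σ' : A ≃ V, SW G c σ' ≤ (Fintype.card A : ℚ) * SW G c σ := by
  classical
  have hcardV : 1 < Fintype.card V := by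
    rw [← Fintype.card_congr σ]
    omega
  have hdeg : ∀ v : V, 0 < (G.neighborFinset v).card := by
    intro v
    rw [SimpleGraph.card_neighborFinset_eq_degree]
    exact degree_pos G hconn hcardV v
  have hsum_pair : ∀ i j : A, i ≠ j → util G c σ i + util G c σ j ≤ SW G c σ := by
    intro i j hij
    have h1' : ∑ x ∈ ({i, j} : Finset A), util G c σ x ≤ SW G c σ := by
      apply Finset.sum_le_sum_of_subset_of_nonneg (Finset.subset_univ _)
      intro k _ _
      exact util_nonneg G c σ k
    rwa [Finset.sum_pair hij] at h1'
  have hne_imp : ∀ i j : A, c i = 0 → c j = 1 →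
      util G c (swapA σ i j) i ≤ util G c σ i ∨
      util G c (swapA σ i j) j ≤ util G c σ j := by
    intro i j hi hj
    have hne : ¬ improving G c σ i j := fun h => heq ⟨i, j, h⟩
    rw [improving, not_and_or, not_lt, not_lt] at hne
    exact hne
  have hmain : 1 ≤ SW G c σ := by
    by_cases hcomp : ∀ i j : A, c i = 0 → c j = 1 → G.Adj (σ i) (σ j)
    · -- every red node is adjacent to every blue node
      obtain ⟨i1, hi1, i2, hi2, hii⟩ := Finset.one_lt_card.mp (lt_of_lt_of_le one_lt_two h0)
      obtain ⟨j1, hj1, j2, hj2, hjj⟩ := Finset.one_lt_card.mp (lt_of_lt_of_le one_lt_two h1)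
      simp only [Finset.mem_filter, Finset.mem_univ, true_and] at hi1 hi2 hj1 hj2
      have hdeg2R : ∀ i : A, c i = 0 → 2 ≤ (G.neighborFinset (σ i)).card := by
        intro i hi
        have hsub : ({σ j1, σ j2} : Finset V) ⊆ G.neighborFinset (σ i) := by
          intro w hw
          rw [Finset.mem_insert, Finset.mem_singleton] at hw
          rw [SimpleGraph.mem_neighborFinset]
          rcases hw with h | h
          · rw [h]; exact hcomp i j1 hi hj1
          · rw [h]; exact hcomp i j2 hi hj2
        calc 2 = ({σ j1, σ j2} : Finset V).card :=
              (Finset.card_pair (σ.injective.ne hjj)).symm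
          _ ≤ _ := Finset.card_le_card hsub
      have hdeg2B : ∀ j : A, c j = 1 → 2 ≤ (G.neighborFinset (σ j)).card := by
        intro j hj
        have hsub : ({σ i1, σ i2} : Finset V) ⊆ G.neighborFinset (σ j) := by
          intro w hw
          rw [Finset.mem_insert, Finset.mem_singleton] at hw
          rw [SimpleGraph.mem_neighborFinset]
          rcases hw with h | h
          · rw [h]; exact (hcomp i1 j hi1 hj).symm
          · rw [h]; exact (hcomp i2 j hi2 hj).symm
        calc 2 = ({σ i1, σ i2} : Finset V).card :=
              (Finset.card_pair (σ.injective.ne hii)).symm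
          _ ≤ _ := Finset.card_le_card hsub
      have hpair : ∀ i j : A, c i = 0 → c j = 1 →
          1/2 ≤ util G c σ i + util G c σ j := by
        intro i j hi hj
        have hij : c i ≠ c j := by rw [hi, hj]; decide
        have hadj := hcomp i j hi hj
        have hni := util_swap_adj G c σ hij hadj
        have hnj := util_swap_adj G c σ hij.symm hadj.symm
        rw [swapA_comm] at hnj
        have hdi := hdeg2R i hi
        have hdj := hdeg2B j hj
        have h2i : 1/((G.neighborFinset (σ i)).card : ℚ) ≤ 1/2 := by
          apply one_div_le_one_div_of_le
          · norm_num
          · exact_mod_cast hdi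
        have h2j : 1/((G.neighborFinset (σ j)).card : ℚ) ≤ 1/2 := by
          apply one_div_le_one_div_of_le
          · norm_num
          · exact_mod_cast hdj
        rcases hne_imp i j hi hj with h | h
        · rw [hni] at h; linarith
        · rw [hnj] at h; linarith
      have hA := hpair i1 j1 hi1 hj1
      have hB := hpair i2 j2 hi2 hj2
      have hij11 : i1 ≠ j1 := fun h => by rw [h, hj1] at hi1; exact absurd hi1 (by decide)
      have hij12 : i1 ≠ j2 := fun h => by rw [h, hj2] at hi1; exact absurd hi1 (by decide)
      have hij21 : i2 ≠ j1 := fun h => by rw [h, hj1] at hi2; exact absurd hi2 (by decide)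
      have hij22 : i2 ≠ j2 := fun h => by rw [h, hj2] at hi2; exact absurd hi2 (by decide)
      have h4 : ∑ x ∈ ({i1, i2, j1, j2} : Finset A), util G c σ x ≤ SW G c σ := by
        apply Finset.sum_le_sum_of_subset_of_nonneg (Finset.subset_univ _)
        intro k _ _
        exact util_nonneg G c σ k
      rw [Finset.sum_insert (by simp [hii, hij11, hij12]),
        Finset.sum_insert (by simp [hij21, hij22]),
        Finset.sum_pair hjj] at h4
      linarith
    · push_neg at hcomp
      obtain ⟨i, j, hi, hj, hna⟩ := hcomp
      have hij : c i ≠ c j := by rw [hi, hj]; decide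
      have hijne : i ≠ j := fun h => hij (by rw [h])
      have hni := util_swap_not_adj G c σ hij hna (hdeg _)
      have hnj := util_swap_not_adj G c σ hij.symm (fun h => hna h.symm) (hdeg _)
      rw [swapA_comm] at hnj
      have hsp := hsum_pair i j hijne
      rcases hne_imp i j hi hj with h | h
      · rw [hni] at h; linarith
      · rw [hnj] at h; linarith
  refine ⟨hmain, fun σ' => ?_⟩
  have hb : SW G c σ' ≤ (Fintype.card A : ℚ) := by
    rw [SW]
    calc ∑ i : A, util G c σ' i ≤ ∑ _i : A, (1 : ℚ) :=
          Finset.sum_le_sum (fun i _ => util_le_one G c σ' i)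
      _ = (Fintype.card A : ℚ) := by simp
  calc SW G c σ' ≤ (Fintype.card A : ℚ) := hb
    _ = (Fintype.card A : ℚ) * 1 := (mul_one _).symm
    _ ≤ (Fintype.card A : ℚ) * SW G c σ := by
        apply mul_le_mul_of_nonneg_left hmain (by positivity)


end SwapGame
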